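/- Let p be an odd prime, m ≥ 1, s ≥ 2, and let λ_0 be a nonzero element of F_{p^m}. Then the code C_2(1, p^s, λ_0) is a linear code over F_{p^m} of length p^s, dimension p^s − 2, minimum distance 2, and minimum locality p^s − p^{s−1} − 1; in particular it is an optimal LRC, i.e., 2 = p^s − (p^s − 2) − ⌈(p^s − 2)/(p^s − p^{s−1} − 1)⌉ + 2. -/

import Mathlib

open Polynomial

variable {F : Type} [Field F] [Fintype F] [DecidableEq F]

/-- `d` is the minimum distance (minimum Hamming weight of a nonzero codeword) of `Cset`. -/
def minDistIs {n : ℕ} (Cset : Set (Fin n → F)) (d : ℕ) : Prop :=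
  IsLeast {w : ℕ | ∃ c ∈ Cset, c ≠ 0 ∧ hammingNorm c = w} d

/-- The `i`-th code symbol of `Cset` has locality `r`. -/
def symbolLocality {n : ℕ} (Cset : Set (Fin n → F)) (i : Fin n) (r : ℕ) : Prop :=
  ∃ I : Finset (Fin n), i ∉ I ∧ I.card ≤ r ∧
    ∃ f : ({x : Fin n // x ∈ I} → F) → F, ∀ c ∈ Cset, c i = f (fun j => c j.1)

/-- `Cset` has all-symbol locality `r`. -/
def hasAllSymbolLocality {n : ℕ} (Cset : Set (Fin n → F)) (r : ℕ) : Prop :=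
  ∀ i : Fin n, symbolLocality Cset i r

/-- `r` is the minimum locality of `Cset`. -/
def minLocalityIs {n : ℕ} (Cset : Set (Fin n → F)) (r : ℕ) : Prop :=
  IsLeast {r' : ℕ | hasAllSymbolLocality Cset r'} r

/-- The λ-constacyclic code of length `n` corresponding to the ideal generated by (the image of)
`g` in `F[x]/⟨x^n − λ⟩`, viewed as a set of vectors via the coefficient identification. -/
def codeOfGen (n : ℕ) (lam : F) (g : F[X]) : Set (Fin n → F) :=
  {c | (∑ j : Fin n, Polynomial.C (c j) * X ^ (j : ℕ)) ∈ Ideal.span {g, X ^ n - Polynomial.C lam}}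

/-- The code `C_i(η, p^s, λ₀)`: the λ-constacyclic code of length `η p^s`
generated by `(x^η − λ₀)^i`, where `λ = λ₀^{p^s}`. -/
def Ci (p η s i : ℕ) (lam0 : F) : Set (Fin (η * p ^ s) → F) :=
  codeOfGen (η * p ^ s) (lam0 ^ p ^ s) ((X ^ η - Polynomial.C lam0) ^ i)

/-- The code `C_{i,j}(2p^s, λ₀)` with `λ₀ = δ²`: the λ-constacyclic code of length `2 p^s`
generated by `(x − δ)^i (x + δ)^j`, where `λ = λ₀^{p^s}`. -/
def Cij (p s i j : ℕ) (δ : F) : Set (Fin (2 * p ^ s) → F) :=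
  codeOfGen (2 * p ^ s) ((δ ^ 2) ^ p ^ s) ((X - Polynomial.C δ) ^ i * (X + Polynomial.C δ) ^ j)

/-- `V_t = Π_j (t_j + 1)` over the base-`p` digits `t_j` of `t`. -/
def Vdig (p t : ℕ) : ℕ := ((Nat.digits p t).map (· + 1)).prod

/-- Ceiling division `⌈a / b⌉` of natural numbers. -/
def nceil (a b : ℕ) : ℕ := (a + b - 1) / b

/-- `Cset` is an optimal LRC: for its dimension `k`, minimum distance `d` and minimum
locality `r`, the Singleton-like bound `d = n − k − ⌈k/r⌉ + 2` is met with equality. -/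
def optimalLRC {n : ℕ} (Cset : Set (Fin n → F)) : Prop :=
  ∃ k d r : ℕ, Nat.card Cset = Fintype.card F ^ k ∧ minDistIs Cset d ∧
    minLocalityIs Cset r ∧ (d : ℤ) = (n : ℤ) - (k : ℤ) - (nceil k r : ℤ) + 2

set_option linter.unusedSectionVars false
set_option maxHeartbeats 1000000

section Aux

lemma sum_two' {M : Type} [AddCommMonoid M] {n : ℕ} (f : Fin n → M) (a b : Fin n)
    (hab : a ≠ b) (h : ∀ j, j ≠ a → j ≠ b → f j = 0) :
    ∑ j, f j = f a + f b := by
  rw [← Finset.sum_pair hab]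
  refine (Finset.sum_subset (Finset.subset_univ _) fun x _ hx => ?_).symm
  simp only [Finset.mem_insert, Finset.mem_singleton, not_or] at hx
  exact h x hx.1 hx.2

lemma sum_three' {M : Type} [AddCommMonoid M] {n : ℕ} (f : Fin n → M) (a b c : Fin n)
    (hab : a ≠ b) (hac : a ≠ c) (hbc : b ≠ c) (h : ∀ j, j ≠ a → j ≠ b → j ≠ c → f j = 0) :
    ∑ j, f j = f a + f b + f c := by
  have key : ∑ j ∈ ({a, b, c} : Finset (Fin n)), f j = f a + f b + f c := by
    rw [Finset.sum_insert (by simp [hab, hac]), Finset.sum_pair hbc, add_assoc]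
  rw [← key]
  refine (Finset.sum_subset (Finset.subset_univ _) fun x _ hx => ?_).symm
  simp only [Finset.mem_insert, Finset.mem_singleton, not_or] at hx
  exact h x hx.1 hx.2.1 hx.2.2

lemma char_of_card {p m : ℕ} (hp : p.Prime) (hm : 1 ≤ m)
    (hcard : Fintype.card F = p ^ m) : CharP F p := by
  obtain ⟨n, hq, hc⟩ := FiniteField.card F (ringChar F)
  have hdvd : p ∣ ringChar F := by
    have h1 : p ∣ Fintype.card F := by
      rw [hcard]; exact dvd_pow_self p (by omega)
    rw [hc] at h1
    exact hp.dvd_of_dvd_pow h1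
  have : p = ringChar F := (Nat.prime_dvd_prime_iff_eq hp hq).mp hdvd
  rw [this]
  exact ringChar.charP F

lemma card_filter_mod {p : ℕ} (hp : 0 < p) {s : ℕ} (hs : 1 ≤ s) (r0 : ℕ) (hr0 : r0 < p) :
    ((Finset.univ : Finset (Fin (1 * p ^ s))).filter
      (fun j : Fin (1 * p ^ s) => (j : ℕ) % p = r0)).card = p ^ (s - 1) := by
  have hps : 1 * p ^ s = p * p ^ (s - 1) := by
    rw [one_mul, ← pow_succ']
    congr 1
    omega
  rw [← Finset.card_range (p ^ (s - 1))]
  refine Finset.card_bij' (fun j _ => (j : ℕ) / p)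
    (fun k hk => (⟨r0 + p * k, ?_⟩ : Fin (1 * p ^ s))) ?_ ?_ ?_ ?_
  · rw [hps]
    have : k < p ^ (s - 1) := Finset.mem_range.mp hk
    calc r0 + p * k < p + p * k := by omega
    _ = p * (k + 1) := by ring
    _ ≤ p * p ^ (s - 1) := Nat.mul_le_mul_left p (by omega)
  · intro j hj
    refine Finset.mem_range.mpr ?_
    have hjlt : (j : ℕ) < p * p ^ (s - 1) := by rw [← hps]; exact j.2
    exact Nat.div_lt_of_lt_mul hjlt
  · intro k hk
    simp only [Finset.mem_filter, Finset.mem_univ, true_and]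
    simp [Nat.add_mul_mod_self_left, Nat.mod_eq_of_lt hr0]
  · intro j hj
    simp only [Finset.mem_filter, Finset.mem_univ, true_and] at hj
    apply Fin.ext
    simp only
    conv_rhs => rw [← Nat.div_add_mod (j : ℕ) p]
    rw [hj]
    ring
  · intro k hk
    simp only
    rw [Nat.add_mul_div_left _ _ hp, Nat.div_eq_of_lt hr0, zero_add]

lemma sq_dvd_iff (a : F) (P : F[X]) :
    (X - C a) ^ 2 ∣ P ↔ P.eval a = 0 ∧ P.derivative.eval a = 0 := by
  constructor
  · rintro ⟨Q, rfl⟩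
    constructor
    · simp
    · simp [derivative_mul, derivative_pow]
  · rintro ⟨h1, h2⟩
    obtain ⟨Q, hQ⟩ := (dvd_iff_isRoot).mpr h1
    have hQa : Q.eval a = 0 := by
      have := congrArg (fun t => Polynomial.eval a (Polynomial.derivative t)) hQ
      simp [derivative_mul] at this
      rw [h2] at this
      simpa using this.symm
    obtain ⟨R, hR⟩ := (dvd_iff_isRoot).mpr hQa
    exact ⟨R, by rw [hQ, hR]; ring⟩

lemma mem_Ci_iff {p : ℕ} (hp : p.Prime) [CharP F p] {s : ℕ} (hs : 2 ≤ p ^ s)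
    {lam0 : F} (hlam0 : lam0 ≠ 0) (c : Fin (1 * p ^ s) → F) :
    c ∈ Ci p 1 s 2 lam0 ↔
      (∑ j : Fin (1 * p ^ s), c j * lam0 ^ (j : ℕ) = 0 ∧
       ∑ j : Fin (1 * p ^ s), c j * ((j : ℕ) : F) * lam0 ^ (j : ℕ) = 0) := by
  haveI : Fact p.Prime := ⟨hp⟩
  set P : F[X] := ∑ j : Fin (1 * p ^ s), C (c j) * X ^ (j : ℕ) with hP
  have hfrob : (X ^ (1 * p ^ s) - C (lam0 ^ p ^ s) : F[X])
      = (X - C lam0) ^ 2 * (X - C lam0) ^ (p ^ s - 2) := by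
    rw [← pow_add, Nat.add_sub_cancel' hs, one_mul]
    rw [sub_pow_char_pow, map_pow]
  have hmem : c ∈ Ci p 1 s 2 lam0 ↔ (X - C lam0) ^ 2 ∣ P := by
    unfold Ci codeOfGen
    rw [Set.mem_setOf_eq, pow_one, hfrob, Ideal.mem_span_pair]
    constructor
    · rintro ⟨a, b, hab⟩
      exact ⟨a + b * (X - C lam0) ^ (p ^ s - 2), by rw [hP, ← hab]; ring⟩
    · rintro ⟨Q, hQ⟩
      exact ⟨Q, 0, by rw [← hP, hQ]; ring⟩
  rw [hmem, sq_dvd_iff]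
  have he1 : P.eval lam0 = ∑ j : Fin (1 * p ^ s), c j * lam0 ^ (j : ℕ) := by
    simp [hP, eval_finset_sum]
  have he2 : P.derivative.eval lam0
      = ∑ j : Fin (1 * p ^ s), c j * ((j : ℕ) : F) * lam0 ^ ((j : ℕ) - 1) := by
    simp only [hP, derivative_sum, derivative_C_mul_X_pow, eval_finset_sum, eval_mul, eval_pow,
      eval_X, eval_C]
  rw [he1, he2]
  have key : ∑ j : Fin (1 * p ^ s), c j * ((j : ℕ) : F) * lam0 ^ (j : ℕ)
      = lam0 * ∑ j : Fin (1 * p ^ s), c j * ((j : ℕ) : F) * lam0 ^ ((j : ℕ) - 1) := by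
    rw [Finset.mul_sum]
    refine Finset.sum_congr rfl fun j _ => ?_
    rcases Nat.eq_zero_or_pos (j : ℕ) with h | h
    · simp [h]
    · obtain ⟨k, hk⟩ := Nat.exists_eq_succ_of_ne_zero h.ne'
      rw [hk]
      simp only [Nat.succ_sub_one, pow_succ]
      ring
  constructor
  · rintro ⟨h1, h2⟩
    exact ⟨h1, by rw [key, h2, mul_zero]⟩
  · rintro ⟨h1, h2⟩
    rw [key] at h2
    exact ⟨h1, (mul_eq_zero.mp h2).resolve_left hlam0⟩

def Lmap (n : ℕ) (lam0 : F) : (Fin n → F) →ₗ[F] F × F where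
  toFun c := (∑ j, c j * lam0 ^ (j : ℕ), ∑ j, c j * ((j : ℕ) : F) * lam0 ^ (j : ℕ))
  map_add' c d := by
    simp only [Pi.add_apply, Prod.mk_add_mk, Prod.mk.injEq]
    constructor <;> rw [← Finset.sum_add_distrib] <;> exact Finset.sum_congr rfl fun j _ => by ring
  map_smul' t c := by
    simp only [Pi.smul_apply, smul_eq_mul, RingHom.id_apply, Prod.smul_mk, Prod.mk.injEq]
    constructor <;> rw [Finset.mul_sum] <;> exact Finset.sum_congr rfl fun j _ => by ring

lemma Lmap_surj {n : ℕ} (hn : 2 ≤ n) {lam0 : F} (hlam0 : lam0 ≠ 0) :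
    Function.Surjective (Lmap n lam0) := by
  rintro ⟨x, y⟩
  set j0 : Fin n := ⟨0, by omega⟩ with hj0d
  set j1 : Fin n := ⟨1, by omega⟩ with hj1d
  have h01 : j0 ≠ j1 := by simp [hj0d, hj1d, Fin.ext_iff]
  refine ⟨fun j => if j = j0 then x - y else if j = j1 then y * lam0⁻¹ else 0, ?_⟩
  simp only [Lmap, LinearMap.coe_mk, AddHom.coe_mk, Prod.mk.injEq]
  constructor
  · rw [sum_two' _ j0 j1 h01 (fun j hja hjb => by simp [if_neg hja, if_neg hjb])]
    simp [if_neg h01.symm]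
    field_simp
    rw [hj0d, hj1d]
    simp only [Fin.val_mk, pow_zero, pow_one, Nat.cast_zero, Nat.cast_one]
    ring
  · rw [sum_two' _ j0 j1 h01 (fun j hja hjb => by simp [if_neg hja, if_neg hjb])]
    simp [if_neg h01.symm]
    field_simp
    rw [hj0d, hj1d]
    simp only [Fin.val_mk, pow_zero, pow_one, Nat.cast_zero, Nat.cast_one]
    ring

lemma hammingNorm_eq_filter {n : ℕ} (c : Fin n → F) :
    hammingNorm c = (Finset.univ.filter fun j => c j ≠ 0).card := by
  unfold hammingNorm
  congr 1

lemma two_le_hammingNorm {n : ℕ} (c : Fin n → F) (a b : Fin n) (hab : a ≠ b)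
    (ha : c a ≠ 0) (hb : c b ≠ 0) : 2 ≤ hammingNorm c := by
  rw [hammingNorm_eq_filter]
  refine Finset.one_lt_card.mpr ⟨a, ?_, b, ?_, hab⟩ <;> simp [ha, hb]

end Aux

/-- For odd prime `p` and `s ≥ 2`, the code `C_2(1, p^s, λ₀)` has length `p^s`,
dimension `p^s − 2`, minimum distance `2` and minimum locality `p^s − p^{s−1} − 1`; in
particular it is an optimal LRC. -/
theorem stmt6 {p m : ℕ} (hp : p.Prime) (hp2 : p ≠ 2) (hm : 1 ≤ m)
    {F : Type} [Field F] [Fintype F] [DecidableEq F] (hcard : Fintype.card F = p ^ m)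
    (s : ℕ) (hs : 2 ≤ s) (lam0 : F) (hlam0 : lam0 ≠ 0) :
    Nat.card (Ci p 1 s 2 lam0) = (p ^ m) ^ (p ^ s - 2) ∧
    minDistIs (Ci p 1 s 2 lam0) 2 ∧
    minLocalityIs (Ci p 1 s 2 lam0) (p ^ s - p ^ (s - 1) - 1) ∧
    (2 : ℤ) = (p ^ s : ℤ) - ((p ^ s - 2 : ℕ) : ℤ)
      - (nceil (p ^ s - 2) (p ^ s - p ^ (s - 1) - 1) : ℤ) + 2 := by
  haveI : CharP F p := char_of_card hp hm hcard
  have hp3 : 3 ≤ p := by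
    have := hp.two_le
    rcases Nat.lt_or_ge p 3 with h | h
    · interval_cases p <;> simp_all
    · exact h
  have hppos : 0 < p := by omega
  have hs1 : 1 ≤ s := by omega
  -- basic numeric facts
  have hBp : p ≤ p ^ (s - 1) := by
    calc p = p ^ 1 := (pow_one p).symm
    _ ≤ p ^ (s - 1) := Nat.pow_le_pow_right hppos (by omega)
  have hB3 : 3 ≤ p ^ (s - 1) := le_trans hp3 hBp
  have hAB : p ^ s = p * p ^ (s - 1) := by
    rw [← pow_succ']
    congr 1
    omega
  have h2B : 2 * p ^ (s - 1) ≤ p ^ s := by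
    rw [hAB]
    exact Nat.mul_le_mul_right _ (by omega)
  have hA9 : 9 ≤ p ^ s := by
    rw [hAB]
    calc (9 : ℕ) = 3 * 3 := rfl
    _ ≤ p * p ^ (s - 1) := Nat.mul_le_mul hp3 hB3
  have hps2 : 2 ≤ p ^ s := by omega
  have hn2 : 2 ≤ 1 * p ^ s := by omega
  have hnpos : 0 < 1 * p ^ s := by omega
  -- Part 1: cardinality
  have part1 : Nat.card (Ci p 1 s 2 lam0) = (p ^ m) ^ (p ^ s - 2) := by
    have hker : Ci p 1 s 2 lam0 = (LinearMap.ker (Lmap (1 * p ^ s) lam0) : Set (Fin (1 * p ^ s) → F)) := by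
      ext c
      rw [mem_Ci_iff hp hps2 hlam0 c]
      simp [Lmap, LinearMap.mem_ker, Prod.ext_iff]
    have hrange : LinearMap.range (Lmap (1 * p ^ s) lam0) = ⊤ :=
      LinearMap.range_eq_top.mpr (Lmap_surj hn2 hlam0)
    have hfr : Module.finrank F ↥(LinearMap.ker (Lmap (1 * p ^ s) lam0)) = 1 * p ^ s - 2 := by
      have h := LinearMap.finrank_range_add_finrank_ker (Lmap (1 * p ^ s) lam0)
      rw [hrange, finrank_top, Module.finrank_pi, Fintype.card_fin] at h
      have h2 : Module.finrank F (F × F) = 2 := by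
        rw [Module.finrank_prod, Module.finrank_self]
      rw [h2] at h
      omega
    haveI : Fintype ↥(LinearMap.ker (Lmap (1 * p ^ s) lam0)) := Fintype.ofFinite _
    rw [hker]
    have : Nat.card ↥(LinearMap.ker (Lmap (1 * p ^ s) lam0)) = (p ^ m) ^ (p ^ s - 2) := by
      rw [Nat.card_eq_fintype_card, Module.card_eq_pow_finrank (K := F), hfr, hcard, one_mul]
    exact this
  refine ⟨part1, ?_, ?_, ?_⟩
  -- Part 2: minimum distance
  · constructor
    · -- membership: a weight-2 codeword
      have hplt : p < 1 * p ^ s := by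
        rw [one_mul, hAB]
        have := Nat.mul_le_mul_left p hB3
        omega
      set j0 : Fin (1 * p ^ s) := ⟨0, hnpos⟩ with hj0d
      set jp : Fin (1 * p ^ s) := ⟨p, hplt⟩ with hjpd
      have h0p : j0 ≠ jp := by
        simp only [hj0d, hjpd, ne_eq, Fin.mk.injEq]
        omega
      set c : Fin (1 * p ^ s) → F :=
        (fun j => if j = j0 then -lam0 ^ p else if j = jp then 1 else 0) with hcdef
      have hcj0 : c j0 = -lam0 ^ p := by simp [hcdef]
      have hcjp : c jp = 1 := by simp [hcdef, if_neg h0p.symm]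
      refine ⟨c, ?_, ?_, ?_⟩
      · rw [mem_Ci_iff hp hps2 hlam0]
        constructor
        · rw [sum_two' _ j0 jp h0p (fun j hja hjb => by simp [hcdef, if_neg hja, if_neg hjb])]
          rw [hcj0, hcjp]
          have e0 : ((j0 : ℕ)) = 0 := rfl
          have ep : ((jp : ℕ)) = p := rfl
          rw [e0, ep]
          ring
        · rw [sum_two' _ j0 jp h0p (fun j hja hjb => by simp [hcdef, if_neg hja, if_neg hjb])]
          rw [hcj0, hcjp]
          have e0 : ((j0 : ℕ)) = 0 := rfl
          have ep : ((jp : ℕ)) = p := rfl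
          rw [e0, ep]
          simp [CharP.cast_eq_zero F p]
      · intro h
        have := congrFun h jp
        rw [hcjp] at this
        simpa using this
      · rw [hammingNorm_eq_filter]
        have hfil : (Finset.univ.filter fun j => c j ≠ 0) = {j0, jp} := by
          ext j
          simp only [Finset.mem_filter, Finset.mem_univ, true_and, Finset.mem_insert,
            Finset.mem_singleton]
          constructor
          · intro hj
            by_contra hcon
            push_neg at hcon
            simp [hcdef, if_neg hcon.1, if_neg hcon.2] at hj
          · rintro (rfl | rfl)
            · rw [hcj0]
              exact neg_ne_zero.mpr (pow_ne_zero _ hlam0)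
            · rw [hcjp]
              exact one_ne_zero
        rw [hfil, Finset.card_pair h0p]
    · -- lower bound: no nonzero codeword of weight < 2
      rintro w ⟨c, hc, hne, rfl⟩
      by_contra hlt
      push_neg at hlt
      obtain ⟨j0, hj0⟩ := Function.ne_iff.mp hne
      have hj0' : c j0 ≠ 0 := hj0
      have h1 := ((mem_Ci_iff hp hps2 hlam0 c).mp hc).1
      have hall : ∀ b : Fin (1 * p ^ s), b ≠ j0 → c b = 0 := by
        intro b hb
        by_contra hcb
        exact absurd (two_le_hammingNorm c j0 b (Ne.symm hb) hj0' hcb) (by omega)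
      rw [Finset.sum_eq_single_of_mem j0 (Finset.mem_univ _)
        (fun b _ hb => by rw [hall b hb, zero_mul])] at h1
      exact (mul_ne_zero hj0' (pow_ne_zero _ hlam0)) h1
  -- Part 3: minimum locality
  · constructor
    · -- upper bound: all-symbol locality p^s - p^(s-1) - 1
      intro i
      set r0F : F := ((i : ℕ) : F) + 1 with hr0F
      set w : Fin (1 * p ^ s) → F :=
        (fun j => lam0 ^ (j : ℕ) * (((j : ℕ) : F) - r0F)) with hwdef
      set S : Finset (Fin (1 * p ^ s)) :=
        Finset.univ.filter (fun j => ¬ ((j : ℕ) : F) = r0F) with hSdef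
      have hiS : i ∈ S := by
        simp only [hSdef, Finset.mem_filter, Finset.mem_univ, true_and, hr0F]
        intro h
        exact one_ne_zero ((left_eq_add).mp h)
      have hcompl : (Finset.univ.filter
          (fun j : Fin (1 * p ^ s) => ((j : ℕ) : F) = r0F)).card = p ^ (s - 1) := by
        have hiff : ∀ j : Fin (1 * p ^ s),
            (((j : ℕ) : F) = r0F) ↔ ((j : ℕ) % p = ((i : ℕ) + 1) % p) := by
          intro j
          rw [hr0F, show (((i : ℕ) : F) + 1) = (((i : ℕ) + 1 : ℕ) : F) by push_cast; ring,
            CharP.natCast_eq_natCast F p]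
          exact Iff.rfl
        rw [Finset.filter_congr (fun j _ => hiff j)]
        exact card_filter_mod hppos hs1 _ (Nat.mod_lt _ hppos)
      have hScard : S.card = 1 * p ^ s - p ^ (s - 1) := by
        have h := Finset.card_filter_add_card_filter_not
          (s := (Finset.univ : Finset (Fin (1 * p ^ s))))
          (p := fun j : Fin (1 * p ^ s) => ((j : ℕ) : F) = r0F)
        rw [hcompl, Finset.card_univ, Fintype.card_fin] at h
        rw [hSdef]
        omega
      refine ⟨S.erase i, Finset.notMem_erase i S, ?_, ?_⟩
      · rw [Finset.card_erase_of_mem hiS, hScard]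
        omega
      · refine ⟨fun v => -(w i)⁻¹ * ∑ j : {x : Fin (1 * p ^ s) // x ∈ S.erase i}, w j.1 * v j, ?_⟩
        intro c hc
        obtain ⟨h1, h2⟩ := (mem_Ci_iff hp hps2 hlam0 c).mp hc
        have hwi : w i ≠ 0 := by
          rw [hwdef]
          simp only
          apply mul_ne_zero (pow_ne_zero _ hlam0)
          rw [hr0F]
          intro h
          rw [show ((i : ℕ) : F) - (((i : ℕ) : F) + 1) = -1 by ring] at h
          exact one_ne_zero (neg_eq_zero.mp h)
        have key : ∑ j : Fin (1 * p ^ s), w j * c j = 0 := by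
          have hterm : ∀ j : Fin (1 * p ^ s), w j * c j
              = c j * ((j : ℕ) : F) * lam0 ^ (j : ℕ) - r0F * (c j * lam0 ^ (j : ℕ)) := by
            intro j
            rw [hwdef]
            ring
          rw [Finset.sum_congr rfl (fun j _ => hterm j), Finset.sum_sub_distrib,
            ← Finset.mul_sum, h1, h2, mul_zero, sub_zero]
        have hkeyS : ∑ j ∈ S, w j * c j = 0 := by
          rw [Finset.sum_subset (Finset.subset_univ S) (fun x _ hx => ?_)]
          · exact key
          · simp only [hSdef, Finset.mem_filter, Finset.mem_univ, true_and, not_not] at hx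
            rw [hwdef]
            simp [hx]
        rw [← Finset.insert_erase hiS, Finset.sum_insert (Finset.notMem_erase i S)] at hkeyS
        have hsum : ∑ j : {x : Fin (1 * p ^ s) // x ∈ S.erase i}, w j.1 * c j.1
            = ∑ j ∈ S.erase i, w j * c j := Finset.sum_coe_sort (S.erase i) (fun x => w x * c x)
        show c i = -(w i)⁻¹ * ∑ j : {x : Fin (1 * p ^ s) // x ∈ S.erase i}, w j.1 * c j.1
        rw [hsum]
        have h3 : w i * c i = -∑ j ∈ S.erase i, w j * c j := eq_neg_of_add_eq_zero_left hkeyS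
        calc c i = (w i)⁻¹ * (w i * c i) := (inv_mul_cancel_left₀ hwi (c i)).symm
        _ = (w i)⁻¹ * -∑ j ∈ S.erase i, w j * c j := by rw [h3]
        _ = -(w i)⁻¹ * ∑ j ∈ S.erase i, w j * c j := by ring
    · -- lower bound on locality
      intro r' hr'
      by_contra hcon
      push_neg at hcon
      set i0 : Fin (1 * p ^ s) := ⟨0, hnpos⟩ with hi0d
      obtain ⟨I, hi0I, hIcard, f, hf⟩ := hr' i0
      set U : Finset (Fin (1 * p ^ s)) := (insert i0 I)ᶜ with hUdef
      have hUcard : p ^ (s - 1) + 1 ≤ U.card := by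
        rw [hUdef, Finset.card_compl]
        have hins : (insert i0 I).card ≤ r' + 1 :=
          le_trans (Finset.card_insert_le _ _) (by omega)
        rw [Fintype.card_fin]
        omega
      have hex : ∃ j2 ∈ U, ∃ j3 ∈ U, (j2 : ℕ) % p ≠ (j3 : ℕ) % p := by
        by_contra hsame
        push_neg at hsame
        obtain ⟨u0, hu0⟩ := Finset.card_pos.mp (show 0 < U.card by omega)
        have hsub : U ⊆ Finset.univ.filter
            (fun j : Fin (1 * p ^ s) => (j : ℕ) % p = (u0 : ℕ) % p) := by
          intro x hx
          simp only [Finset.mem_filter, Finset.mem_univ, true_and]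
          exact hsame x hx u0 hu0
        have hle := Finset.card_le_card hsub
        rw [card_filter_mod hppos hs1 _ (Nat.mod_lt _ hppos)] at hle
        omega
      obtain ⟨j2, hj2U, j3, hj3U, hjj⟩ := hex
      have hj2 : j2 ≠ i0 ∧ j2 ∉ I := by
        rw [hUdef, Finset.mem_compl, Finset.mem_insert] at hj2U
        push_neg at hj2U
        exact hj2U
      have hj3 : j3 ≠ i0 ∧ j3 ∉ I := by
        rw [hUdef, Finset.mem_compl, Finset.mem_insert] at hj3U
        push_neg at hj3U
        exact hj3U
      have hj23 : j2 ≠ j3 := fun h => hjj (by rw [h])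
      set a : F := ((j2 : ℕ) : F) with hadef
      set b : F := ((j3 : ℕ) : F) with hbdef
      have hab : a ≠ b := by
        rw [hadef, hbdef]
        intro h
        exact hjj ((CharP.natCast_eq_natCast F p).mp h)
      have hD : a - b ≠ 0 := sub_ne_zero.mpr hab
      have hl2 : lam0 ^ (j2 : ℕ) ≠ 0 := pow_ne_zero _ hlam0
      have hl3 : lam0 ^ (j3 : ℕ) ≠ 0 := pow_ne_zero _ hlam0
      set c : Fin (1 * p ^ s) → F := (fun j =>
        if j = i0 then 1 else if j = j2 then b * (a - b)⁻¹ * (lam0 ^ (j2 : ℕ))⁻¹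
        else if j = j3 then -(a * (a - b)⁻¹ * (lam0 ^ (j3 : ℕ))⁻¹) else 0) with hcdef
      have hci0 : c i0 = 1 := by simp [hcdef]
      have hcj2 : c j2 = b * (a - b)⁻¹ * (lam0 ^ (j2 : ℕ))⁻¹ := by
        simp [hcdef, if_neg hj2.1]
      have hcj3 : c j3 = -(a * (a - b)⁻¹ * (lam0 ^ (j3 : ℕ))⁻¹) := by
        simp [hcdef, if_neg hj3.1, if_neg hj23.symm]
      have hvan : ∀ j, j ≠ i0 → j ≠ j2 → j ≠ j3 → c j = 0 := by
        intro j hx hy hz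
        simp [hcdef, if_neg hx, if_neg hy, if_neg hz]
      have hmem : c ∈ Ci p 1 s 2 lam0 := by
        rw [mem_Ci_iff hp hps2 hlam0]
        have e0 : ((i0 : ℕ)) = 0 := rfl
        constructor
        · rw [sum_three' _ i0 j2 j3 (Ne.symm hj2.1) (Ne.symm hj3.1) hj23
            (fun j hx hy hz => by rw [hvan j hx hy hz, zero_mul])]
          rw [hci0, hcj2, hcj3, e0]
          field_simp
          ring
        · rw [sum_three' _ i0 j2 j3 (Ne.symm hj2.1) (Ne.symm hj3.1) hj23
            (fun j hx hy hz => by rw [hvan j hx hy hz, zero_mul, zero_mul])]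
          rw [hci0, hcj2, hcj3, e0]
          simp only [Nat.cast_zero, mul_zero, zero_mul, one_mul, pow_zero]
          field_simp
          ring
      have hzero : (0 : Fin (1 * p ^ s) → F) ∈ Ci p 1 s 2 lam0 := by
        rw [mem_Ci_iff hp hps2 hlam0]
        constructor <;> simp
      have h0f : (0 : F) = f (fun j => 0) := by
        have h := hf 0 hzero
        simpa using h
      have hifx : c i0 = f (fun j => c j.1) := hf c hmem
      have harg : (fun j : {x : Fin (1 * p ^ s) // x ∈ I} => c j.1)
          = (fun _ => (0 : F)) := by
        funext j
        exact hvan j.1 (fun h => hi0I (h ▸ j.2)) (fun h => hj2.2 (h ▸ j.2))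
          (fun h => hj3.2 (h ▸ j.2))
      rw [harg, ← h0f, hci0] at hifx
      exact one_ne_zero hifx
  -- Part 4: arithmetic identity
  · have hr : nceil (p ^ s - 2) (p ^ s - p ^ (s - 1) - 1) = 2 := by
      unfold nceil
      apply Nat.div_eq_of_lt_le <;> omega
    rw [hr]
    have : ((p ^ s - 2 : ℕ) : ℤ) = (p ^ s : ℤ) - 2 := by
      push_cast [Nat.cast_sub hps2]
      ring
    rw [this]
    ring
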